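/- Let λ ∈ ℂ, N ∈ ℤ, and let f : ℝ × (0,∞) → ℂ be twice continuously differentiable, 1-periodic in its first argument (f(x+1,y) = f(x,y) for all x ∈ ℝ, y > 0), and satisfy the hyperbolic Laplace eigenvalue equation y²(∂²f/∂x² + ∂²f/∂y²) = λ·f on ℝ × (0,∞). Then the N-th Fourier coefficient a_N(y) := ∫₀¹ f(x,y)·e^{−2πiNx} dx is twice differentiable on (0,∞) and satisfies the modified Bessel-type equation y²·a_N''(y) = (λ + 4π²N²y²)·a_N(y) for all y > 0. -/

import Mathlib

open scoped Real
open Complex MeasureTheory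

noncomputable def eeS5 (N : ℤ) (x : ℝ) : ℂ :=
  Complex.exp (-(2 * (Real.pi : ℂ) * Complex.I * (N : ℂ)) * (x : ℂ))

lemma eeS5_apply (N : ℤ) (x : ℝ) :
    eeS5 N x = Complex.exp (-(2 * (Real.pi : ℂ) * Complex.I * (N : ℂ) * (x : ℂ))) := by
  rw [eeS5, neg_mul]

lemma eeS5_hasDerivAt (N : ℤ) (x : ℝ) :
    HasDerivAt (eeS5 N)
      ((-(2 * (Real.pi : ℂ) * Complex.I * (N : ℂ))) * eeS5 N x) x := by
  set c : ℂ := -(2 * (Real.pi : ℂ) * Complex.I * (N : ℂ)) with hc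
  have h : HasDerivAt (fun z : ℂ => Complex.exp (c * z)) (c * Complex.exp (c * x)) x := by
    simpa [mul_comm] using (((hasDerivAt_id (x : ℂ)).const_mul c).cexp)
  exact h.comp_ofReal

lemma eeS5_norm (N : ℤ) (x : ℝ) : ‖eeS5 N x‖ = 1 := by
  have : eeS5 N x = Complex.exp (((-(2 * Real.pi * N * x) : ℝ) : ℂ) * Complex.I) := by
    rw [eeS5]; congr 1; push_cast; ring
  rw [this]; exact Complex.norm_exp_ofReal_mul_I _

lemma eeS5_zero (N : ℤ) : eeS5 N 0 = 1 := by simp [eeS5]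

lemma eeS5_one (N : ℤ) : eeS5 N 1 = 1 := by
  have : (-(2 * (Real.pi : ℂ) * Complex.I * (N : ℂ))) * ((1 : ℝ) : ℂ)
      = ((-N : ℤ) : ℂ) * (2 * (Real.pi : ℂ) * Complex.I) := by push_cast; ring
  rw [eeS5, this, Complex.exp_int_mul_two_pi_mul_I]

lemma eeS5_continuous (N : ℤ) : Continuous (eeS5 N) :=
  Complex.continuous_exp.comp (by continuity)

lemma s5_deriv_under (N : ℤ) {g g' : ℝ × ℝ → ℂ}
    (hg : ContinuousOn g (Set.univ ×ˢ Set.Ioi (0 : ℝ)))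
    (hg' : ContinuousOn g' (Set.univ ×ˢ Set.Ioi (0 : ℝ)))
    (hd : ∀ x y : ℝ, 0 < y → HasDerivAt (fun y' => g (x, y')) (g' (x, y)) y)
    {y0 : ℝ} (hy0 : 0 < y0) :
    HasDerivAt (fun y => ∫ x in (0:ℝ)..1, g (x, y) * eeS5 N x)
      (∫ x in (0:ℝ)..1, g' (x, y0) * eeS5 N x) y0 := by
  set U : Set (ℝ × ℝ) := Set.univ ×ˢ Set.Ioi (0 : ℝ) with hU
  have hmem : ∀ x y : ℝ, 0 < y → (x, y) ∈ U := fun x y hy => ⟨trivial, hy⟩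
  set K : Set (ℝ × ℝ) := Set.Icc (0:ℝ) 1 ×ˢ Set.Icc (y0/2) (y0 + y0/2) with hK
  have hKc : IsCompact K := (isCompact_Icc).prod isCompact_Icc
  have hKU : K ⊆ U := fun p hp => ⟨trivial, lt_of_lt_of_le (by linarith) hp.2.1⟩
  obtain ⟨C, hC⟩ := hKc.exists_bound_of_continuousOn (hg'.mono hKU)
  have hcont : ∀ y : ℝ, 0 < y → Continuous fun x => g (x, y) := fun y hy =>
    hg.comp_continuous (by continuity) (fun x => hmem x y hy)
  have hcont' : ∀ y : ℝ, 0 < y → Continuous fun x => g' (x, y) := fun y hy =>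
    hg'.comp_continuous (by continuity) (fun x => hmem x y hy)
  have key := intervalIntegral.hasDerivAt_integral_of_dominated_loc_of_deriv_le
    (F := fun y x => g (x, y) * eeS5 N x) (F' := fun y x => g' (x, y) * eeS5 N x)
    (x₀ := y0) (s := Metric.ball y0 (y0/2)) (a := 0) (b := 1) (μ := volume) (bound := fun _ => C)
    (Metric.ball_mem_nhds _ (by linarith))
    (by
      filter_upwards [Ioi_mem_nhds hy0] with y hy
      exact (((hcont y hy).mul (eeS5_continuous N))).aestronglyMeasurable)
    ((((hcont y0 hy0).mul (eeS5_continuous N))).intervalIntegrable 0 1)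
    (((hcont' y0 hy0).mul (eeS5_continuous N))).aestronglyMeasurable
    (by
      filter_upwards with t ht y hy
      have ht' : t ∈ Set.Icc (0:ℝ) 1 := by
        rw [Set.uIoc_of_le (by norm_num : (0:ℝ) ≤ 1)] at ht
        exact ⟨le_of_lt ht.1, ht.2⟩
      have hy' : y ∈ Set.Icc (y0/2) (y0 + y0/2) := by
        rw [Metric.mem_ball, Real.dist_eq, abs_lt] at hy
        constructor <;> linarith [hy.1, hy.2]
      have : ‖g' (t, y) * eeS5 N t‖ = ‖g' (t, y)‖ := by
        rw [norm_mul, eeS5_norm, mul_one]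
      rw [this]
      exact hC _ ⟨ht', hy'⟩)
    (intervalIntegrable_const)
    (by
      filter_upwards with t ht y hy
      have hypos : 0 < y := by
        rw [Metric.mem_ball, Real.dist_eq, abs_lt] at hy
        linarith [hy.1]
      exact (hd t y hypos).mul_const (eeS5 N t))
  exact key.2

/-- The Fourier coefficients of a 1-periodic eigenfunction of the hyperbolic Laplacian
satisfy a modified Bessel-type ordinary differential equation. -/
theorem stmt_5 (lam : ℂ) (N : ℤ) (f : ℝ → ℝ → ℂ)
    (hreg : ContDiffOn ℝ 2 (Function.uncurry f) (Set.univ ×ˢ Set.Ioi (0 : ℝ)))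
    (hper : ∀ x y : ℝ, f (x + 1) y = f x y)
    (hPDE : ∀ x y : ℝ, 0 < y →
      (y : ℂ) ^ 2 * (deriv (fun x' => deriv (fun x'' => f x'' y) x') x +
        deriv (fun y' => deriv (fun y'' => f x y'') y') y) = lam * f x y)
    (aN : ℝ → ℂ)
    (haN : ∀ y : ℝ, aN y =
      ∫ x in (0 : ℝ)..1, f x y * Complex.exp (-(2 * (Real.pi : ℂ) * Complex.I * (N : ℂ) * (x : ℂ)))) :
    (∀ y ∈ Set.Ioi (0 : ℝ), DifferentiableAt ℝ aN y ∧ DifferentiableAt ℝ (deriv aN) y) ∧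
      ∀ y : ℝ, 0 < y → (y : ℂ) ^ 2 * deriv (deriv aN) y =
        (lam + 4 * (Real.pi : ℂ) ^ 2 * (N : ℂ) ^ 2 * (y : ℂ) ^ 2) * aN y := by
  have hUopen : IsOpen (Set.univ ×ˢ Set.Ioi (0 : ℝ) : Set (ℝ × ℝ)) :=
    isOpen_univ.prod isOpen_Ioi
  set U : Set (ℝ × ℝ) := Set.univ ×ˢ Set.Ioi (0 : ℝ) with hUdef
  have hmemU : ∀ x y : ℝ, 0 < y → (x, y) ∈ U := fun x y hy => ⟨trivial, hy⟩
  set F : ℝ × ℝ → ℂ := Function.uncurry f with hFdef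
  -- first-order partial derivatives
  have hF1 : ContDiffOn ℝ 1 (fderiv ℝ F) U :=
    hreg.fderiv_of_isOpen hUopen (by norm_num)
  set fx : ℝ × ℝ → ℂ := fun p => fderiv ℝ F p ((1:ℝ), (0:ℝ)) with hfxdef
  set fy : ℝ × ℝ → ℂ := fun p => fderiv ℝ F p ((0:ℝ), (1:ℝ)) with hfydef
  have hfx1 : ContDiffOn ℝ 1 fx U := hF1.clm_apply contDiffOn_const
  have hfy1 : ContDiffOn ℝ 1 fy U := hF1.clm_apply contDiffOn_const
  -- second-order partial derivatives
  set fxx : ℝ × ℝ → ℂ := fun p => fderiv ℝ fx p ((1:ℝ), (0:ℝ)) with hfxxdef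
  set fyy : ℝ × ℝ → ℂ := fun p => fderiv ℝ fy p ((0:ℝ), (1:ℝ)) with hfyydef
  have hfxxC : ContinuousOn fxx U :=
    (hfx1.continuousOn_fderiv_of_isOpen hUopen le_rfl).clm_apply continuousOn_const
  have hfyyC : ContinuousOn fyy U :=
    (hfy1.continuousOn_fderiv_of_isOpen hUopen le_rfl).clm_apply continuousOn_const
  -- differentiability points
  have hFd : ∀ x y : ℝ, 0 < y → DifferentiableAt ℝ F (x, y) := fun x y hy =>
    (hreg.differentiableOn (by norm_num)).differentiableAt (hUopen.mem_nhds (hmemU x y hy))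
  have hfxd : ∀ x y : ℝ, 0 < y → DifferentiableAt ℝ fx (x, y) := fun x y hy =>
    (hfx1.differentiableOn (by norm_num)).differentiableAt (hUopen.mem_nhds (hmemU x y hy))
  have hfyd : ∀ x y : ℝ, 0 < y → DifferentiableAt ℝ fy (x, y) := fun x y hy =>
    (hfy1.differentiableOn (by norm_num)).differentiableAt (hUopen.mem_nhds (hmemU x y hy))
  -- slice derivatives
  have hιx : ∀ x y : ℝ, HasDerivAt (fun x' : ℝ => (x', y)) (((1:ℝ), (0:ℝ)) : ℝ × ℝ) x :=
    fun x y => (hasDerivAt_id x).prodMk (hasDerivAt_const x y)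
  have hιy : ∀ x y : ℝ, HasDerivAt (fun y' : ℝ => (x, y')) (((0:ℝ), (1:ℝ)) : ℝ × ℝ) y :=
    fun x y => (hasDerivAt_const y x).prodMk (hasDerivAt_id y)
  have hdx : ∀ x y : ℝ, 0 < y → HasDerivAt (fun x' => f x' y) (fx (x, y)) x := by
    intro x y hy
    exact ((hFd x y hy).hasFDerivAt).comp_hasDerivAt x (hιx x y)
  have hdy : ∀ x y : ℝ, 0 < y → HasDerivAt (fun y' => f x y') (fy (x, y)) y := by
    intro x y hy
    exact ((hFd x y hy).hasFDerivAt).comp_hasDerivAt y (hιy x y)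
  have hdxx : ∀ x y : ℝ, 0 < y → HasDerivAt (fun x' => fx (x', y)) (fxx (x, y)) x := by
    intro x y hy
    exact ((hfxd x y hy).hasFDerivAt).comp_hasDerivAt x (hιx x y)
  have hdyy : ∀ x y : ℝ, 0 < y → HasDerivAt (fun y' => fy (x, y')) (fyy (x, y)) y := by
    intro x y hy
    exact ((hfyd x y hy).hasFDerivAt).comp_hasDerivAt y (hιy x y)
  -- the PDE in terms of fxx, fyy
  have hPDE' : ∀ x y : ℝ, 0 < y →
      (y : ℂ) ^ 2 * (fxx (x, y) + fyy (x, y)) = lam * f x y := by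
    intro x y hy
    have h1 : deriv (fun x' => deriv (fun x'' => f x'' y) x') x = fxx (x, y) := by
      have he : (fun x' => deriv (fun x'' => f x'' y) x') = fun x' => fx (x', y) :=
        funext fun x' => (hdx x' y hy).deriv
      rw [he]; exact (hdxx x y hy).deriv
    have h2 : deriv (fun y' => deriv (fun y'' => f x y'') y') y = fyy (x, y) := by
      have hev : (fun y' => deriv (fun y'' => f x y'') y') =ᶠ[nhds y] fun y' => fy (x, y') := by
        filter_upwards [Ioi_mem_nhds hy] with y' hy'
        exact (hdy x y' hy').deriv
      rw [hev.deriv_eq]; exact (hdyy x y hy).deriv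
    rw [← h1, ← h2]; exact hPDE x y hy
  -- periodicity of fx
  have hperx : ∀ y : ℝ, 0 < y → fx (1, y) = fx (0, y) := by
    intro y hy
    have hg : HasDerivAt (fun x : ℝ => x + 1) 1 0 := by
      simpa using (hasDerivAt_id (0:ℝ)).add_const 1
    have hf1 : HasDerivAt (fun x' => f x' y) (fx (1, y)) ((0:ℝ) + 1) := by
      rw [zero_add]; exact hdx 1 y hy
    have h1 : HasDerivAt ((fun x' => f x' y) ∘ fun x : ℝ => x + 1) ((1:ℝ) • fx (1, y)) 0 :=
      HasDerivAt.scomp (g₁ := fun x' => f x' y) (g₁' := fx (1, y))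
        (h := fun x : ℝ => x + 1) (h' := 1) 0 hf1 hg
    have h1' : HasDerivAt (fun x : ℝ => f x y) (fx (1, y)) 0 := by
      have heq : ((fun x' => f x' y) ∘ fun x : ℝ => x + 1) = fun x : ℝ => f x y :=
        funext fun x => hper x y
      rw [← heq]; simpa using h1
    exact h1'.unique (hdx 0 y hy)
  -- slice continuity
  have hslice : ∀ g : ℝ × ℝ → ℂ, ContinuousOn g U → ∀ y : ℝ, 0 < y →
      Continuous fun x => g (x, y) := fun g hg y hy =>
    hg.comp_continuous (by continuity) (fun x => hmemU x y hy)
  have contf : ∀ y : ℝ, 0 < y → Continuous fun x => f x y :=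
    fun y hy => hslice F hreg.continuousOn y hy
  have contfx : ∀ y : ℝ, 0 < y → Continuous fun x => fx (x, y) :=
    fun y hy => hslice fx hfx1.continuousOn y hy
  have contfxx : ∀ y : ℝ, 0 < y → Continuous fun x => fxx (x, y) :=
    fun y hy => hslice fxx hfxxC y hy
  have contfyy : ∀ y : ℝ, 0 < y → Continuous fun x => fyy (x, y) :=
    fun y hy => hslice fyy hfyyC y hy
  -- aN rewritten with eeS5
  have haN2 : ∀ y : ℝ, aN y = ∫ x in (0:ℝ)..1, f x y * eeS5 N x := by
    intro y; simp only [eeS5_apply]; exact haN y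
  set c : ℂ := -(2 * (Real.pi : ℂ) * Complex.I * (N : ℂ)) with hcdef
  have hc2 : c ^ 2 = -(4 * (Real.pi : ℂ) ^ 2 * (N : ℂ) ^ 2) := by
    have : c ^ 2 = (2 * (Real.pi : ℂ) * (N : ℂ)) ^ 2 * Complex.I ^ 2 := by rw [hcdef]; ring
    rw [this, Complex.I_sq]; ring
  -- integration by parts, twice
  have fper : ∀ y : ℝ, f 1 y = f 0 y := fun y => by simpa using hper 0 y
  have hI1 : ∀ y : ℝ, 0 < y →
      (∫ x in (0:ℝ)..1, fx (x, y) * eeS5 N x) = -(c * aN y) := by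
    intro y hy
    have ibp := intervalIntegral.integral_deriv_mul_eq_sub
      (u := fun x => f x y) (v := eeS5 N)
      (u' := fun x => fx (x, y)) (v' := fun x => c * eeS5 N x)
      (fun x _ => hdx x y hy) (fun x _ => eeS5_hasDerivAt N x)
      ((contfx y hy).intervalIntegrable 0 1)
      ((continuous_const.mul (eeS5_continuous N)).intervalIntegrable 0 1)
    rw [intervalIntegral.integral_add
        (show IntervalIntegrable (fun x => fx (x, y) * eeS5 N x) volume 0 1 from
          ((contfx y hy).mul (eeS5_continuous N)).intervalIntegrable 0 1)
        (show IntervalIntegrable (fun x => f x y * (c * eeS5 N x)) volume 0 1 from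
          ((contf y hy).mul (continuous_const.mul (eeS5_continuous N))).intervalIntegrable 0 1)]
      at ibp
    have hv : (∫ x in (0:ℝ)..1, f x y * (c * eeS5 N x)) = c * aN y := by
      have he : ∀ x : ℝ, f x y * (c * eeS5 N x) = c * (f x y * eeS5 N x) := fun x => by ring
      simp only [he]
      rw [intervalIntegral.integral_const_mul, ← haN2 y]
    rw [hv] at ibp
    simp only [eeS5_one, eeS5_zero, mul_one] at ibp
    linear_combination ibp + fper y
  have hI2 : ∀ y : ℝ, 0 < y →
      (∫ x in (0:ℝ)..1, fxx (x, y) * eeS5 N x) = c ^ 2 * aN y := by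
    intro y hy
    have ibp := intervalIntegral.integral_deriv_mul_eq_sub
      (u := fun x => fx (x, y)) (v := eeS5 N)
      (u' := fun x => fxx (x, y)) (v' := fun x => c * eeS5 N x)
      (fun x _ => hdxx x y hy) (fun x _ => eeS5_hasDerivAt N x)
      ((contfxx y hy).intervalIntegrable 0 1)
      ((continuous_const.mul (eeS5_continuous N)).intervalIntegrable 0 1)
    rw [intervalIntegral.integral_add
        (show IntervalIntegrable (fun x => fxx (x, y) * eeS5 N x) volume 0 1 from
          ((contfxx y hy).mul (eeS5_continuous N)).intervalIntegrable 0 1)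
        (show IntervalIntegrable (fun x => fx (x, y) * (c * eeS5 N x)) volume 0 1 from
          ((contfx y hy).mul (continuous_const.mul (eeS5_continuous N))).intervalIntegrable 0 1)]
      at ibp
    have hv : (∫ x in (0:ℝ)..1, fx (x, y) * (c * eeS5 N x)) = c * -(c * aN y) := by
      have he : ∀ x : ℝ, fx (x, y) * (c * eeS5 N x) = c * (fx (x, y) * eeS5 N x) := fun x => by
        ring
      simp only [he]
      rw [intervalIntegral.integral_const_mul, hI1 y hy]
    rw [hv] at ibp
    simp only [eeS5_one, eeS5_zero, mul_one] at ibp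
    linear_combination ibp + hperx y hy
  -- differentiation under the integral sign
  set b1 : ℝ → ℂ := fun y => ∫ x in (0:ℝ)..1, fy (x, y) * eeS5 N x with hb1def
  set b2 : ℝ → ℂ := fun y => ∫ x in (0:ℝ)..1, fyy (x, y) * eeS5 N x with hb2def
  have haNfun : aN = fun y => ∫ x in (0:ℝ)..1, F (x, y) * eeS5 N x := funext fun y => haN2 y
  have hDaN : ∀ y0 : ℝ, 0 < y0 → HasDerivAt aN (b1 y0) y0 := by
    intro y0 hy0
    rw [haNfun]
    exact s5_deriv_under N hreg.continuousOn hfy1.continuousOn hdy hy0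
  have hDb1 : ∀ y0 : ℝ, 0 < y0 → HasDerivAt b1 (b2 y0) y0 := by
    intro y0 hy0
    exact s5_deriv_under N hfy1.continuousOn hfyyC hdyy hy0
  have hderiv1 : ∀ y0 : ℝ, 0 < y0 → deriv aN y0 = b1 y0 := fun y0 hy0 => (hDaN y0 hy0).deriv
  have hev : ∀ y0 : ℝ, 0 < y0 → deriv aN =ᶠ[nhds y0] b1 := by
    intro y0 hy0
    filter_upwards [Ioi_mem_nhds hy0] with y hy using hderiv1 y hy
  have hderiv2 : ∀ y0 : ℝ, 0 < y0 → deriv (deriv aN) y0 = b2 y0 := by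
    intro y0 hy0
    rw [(hev y0 hy0).deriv_eq]
    exact (hDb1 y0 hy0).deriv
  constructor
  · intro y hy
    rw [Set.mem_Ioi] at hy
    refine ⟨(hDaN y hy).differentiableAt, ?_⟩
    exact ((hev y hy).symm.differentiableAt_iff).mp (hDb1 y hy).differentiableAt
  · intro y hy
    rw [hderiv2 y hy]
    have intxx : IntervalIntegrable (fun x => fxx (x, y) * eeS5 N x) volume 0 1 :=
      ((contfxx y hy).mul (eeS5_continuous N)).intervalIntegrable 0 1
    have intyy : IntervalIntegrable (fun x => fyy (x, y) * eeS5 N x) volume 0 1 :=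
      ((contfyy y hy).mul (eeS5_continuous N)).intervalIntegrable 0 1
    have hlamEq : (y:ℂ)^2 * ((∫ x in (0:ℝ)..1, fxx (x, y) * eeS5 N x)
        + (∫ x in (0:ℝ)..1, fyy (x, y) * eeS5 N x)) = lam * aN y := by
      rw [← intervalIntegral.integral_add intxx intyy,
        ← intervalIntegral.integral_const_mul]
      have he : ∀ x : ℝ, (y:ℂ)^2 * (fxx (x, y) * eeS5 N x + fyy (x, y) * eeS5 N x)
          = lam * (f x y * eeS5 N x) := by
        intro x
        have h0 : (y:ℂ)^2 * (fxx (x, y) * eeS5 N x + fyy (x, y) * eeS5 N x)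
            = ((y:ℂ)^2 * (fxx (x, y) + fyy (x, y))) * eeS5 N x := by ring
        rw [h0, hPDE' x y hy]; ring
      simp only [he]
      rw [intervalIntegral.integral_const_mul, ← haN2 y]
    have hxx := hI2 y hy
    have hb2y : b2 y = ∫ x in (0:ℝ)..1, fyy (x, y) * eeS5 N x := rfl
    rw [hb2y]
    linear_combination hlamEq - (y:ℂ)^2 * hxx - (y:ℂ)^2 * aN y * hc2
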